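/- Let V = V1 ⊕ V2 ⊕ V3 as above. If G is a maximal isotropic subspace of V that does not split as a direct product of maximal isotropic subspaces of V_i and the complementary sum, then the nonzero elements of each Vi can be labeled P_i, Q_i, R_i so that G = {(0,0,0), (0,Q2,Q3), (Q1,0,Q3), (Q1,Q2,0), (P1,P2,P3), (P1,R2,R3), (R1,P2,R3), (R1,R2,P3)}. -/

import Mathlib

/-- The 2-dimensional symplectic space over `𝔽₂`, i.e. the 2-torsion of an elliptic curve. -/
abbrev TwoTorsion : Type := ZMod 2 × ZMod 2

/-- The unique non-degenerate alternating form on `TwoTorsion`: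
`eps x y = 1` iff `x` and `y` are distinct nonzero vectors. -/
def eps (x y : TwoTorsion) : ZMod 2 := x.1 * y.2 + x.2 * y.1

/-- `V = V₁ ⊕ V₂ ⊕ V₃` with each `Vᵢ = TwoTorsion`. -/
abbrev SixSpace : Type := TwoTorsion × TwoTorsion × TwoTorsion

/-- The orthogonal direct sum pairing on two copies of `TwoTorsion`. -/
def eps2 (x y : TwoTorsion × TwoTorsion) : ZMod 2 := eps x.1 y.1 + eps x.2 y.2

/-- The orthogonal direct sum pairing on `SixSpace`. -/
def bigForm (x y : SixSpace) : ZMod 2 := eps x.1 y.1 + eps x.2.1 y.2.1 + eps x.2.2 y.2.2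

def IsotropicV2 (G : Submodule (ZMod 2) TwoTorsion) : Prop :=
  ∀ x ∈ G, ∀ y ∈ G, eps x y = 0

/-- Maximal isotropic subspace of a single factor `Vᵢ`. -/
def MaxIsoV2 (G : Submodule (ZMod 2) TwoTorsion) : Prop :=
  IsotropicV2 G ∧ ∀ G', IsotropicV2 G' → G ≤ G' → G' = G

def IsotropicV4 (G : Submodule (ZMod 2) (TwoTorsion × TwoTorsion)) : Prop :=
  ∀ x ∈ G, ∀ y ∈ G, eps2 x y = 0

/-- Maximal isotropic subspace of the sum of two of the factors. -/
def MaxIsoV4 (G : Submodule (ZMod 2) (TwoTorsion × TwoTorsion)) : Prop :=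
  IsotropicV4 G ∧ ∀ G', IsotropicV4 G' → G ≤ G' → G' = G

def IsotropicV6 (G : Submodule (ZMod 2) SixSpace) : Prop :=
  ∀ x ∈ G, ∀ y ∈ G, bigForm x y = 0

/-- Maximal isotropic subspace of `SixSpace`. -/
def MaxIsoV6 (G : Submodule (ZMod 2) SixSpace) : Prop :=
  IsotropicV6 G ∧ ∀ G', IsotropicV6 G' → G ≤ G' → G' = G

/-- `G` splits as `G₁ × G₂` with `G₁` a maximal isotropic subspace of some `Vᵢ` and `G₂` a
maximal isotropic subspace of the sum of the other two factors. -/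
def Splits (G : Submodule (ZMod 2) SixSpace) : Prop :=
  (∃ S1 S2, MaxIsoV2 S1 ∧ MaxIsoV4 S2 ∧
    ∀ v : SixSpace, v ∈ G ↔ v.1 ∈ S1 ∧ (v.2.1, v.2.2) ∈ S2) ∨
  (∃ S1 S2, MaxIsoV2 S1 ∧ MaxIsoV4 S2 ∧
    ∀ v : SixSpace, v ∈ G ↔ v.2.1 ∈ S1 ∧ (v.1, v.2.2) ∈ S2) ∨
  (∃ S1 S2, MaxIsoV2 S1 ∧ MaxIsoV4 S2 ∧
    ∀ v : SixSpace, v ∈ G ↔ v.2.2 ∈ S1 ∧ (v.1, v.2.1) ∈ S2)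
lemma bigForm_add_left (x y z : SixSpace) : bigForm (x + y) z = bigForm x z + bigForm y z := by
  simp only [bigForm, eps, Prod.fst_add, Prod.snd_add]; ring

lemma bigForm_add_right (x y z : SixSpace) : bigForm x (y + z) = bigForm x y + bigForm x z := by
  simp only [bigForm, eps, Prod.fst_add, Prod.snd_add]; ring

lemma bigForm_comm (x y : SixSpace) : bigForm x y = bigForm y x := by
  simp only [bigForm, eps]; ring

lemma zmod2_cancel (a : ZMod 2) : a + a = 0 := by
  have : (2 : ZMod 2) = 0 := by decide
  calc a + a = 2 * a := by ring
  _ = 0 := by rw [this]; ring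

lemma bigForm_self (x : SixSpace) : bigForm x x = 0 := by
  simp only [bigForm, eps]
  rw [show ∀ a b c d e f : ZMod 2, ((a+b)+(c+d))+(e+f) = (a+b)+((c+d)+(e+f)) from by intros; ring]
  rw [mul_comm x.1.2 x.1.1, zmod2_cancel, mul_comm x.2.1.2 x.2.1.1, zmod2_cancel,
    mul_comm x.2.2.2 x.2.2.1, zmod2_cancel]
  simp

lemma bigForm_zero_right (x : SixSpace) : bigForm x 0 = 0 := by
  simp [bigForm, eps]

lemma bigForm_zero_left (x : SixSpace) : bigForm 0 x = 0 := by
  simp [bigForm, eps]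

lemma zmod2_smul (c : ZMod 2) {M : Type*} [AddCommGroup M] [Module (ZMod 2) M] (v : M) :
    c • v = 0 ∨ c • v = v := by
  fin_cases c
  · left; exact zero_smul (ZMod 2) v
  · right; exact one_smul (ZMod 2) v
lemma hperp {G : Submodule (ZMod 2) SixSpace} (hmax : MaxIsoV6 G) :
    ∀ x : SixSpace, (∀ y ∈ G, bigForm x y = 0) → x ∈ G := by
  intro x hx
  have hsub : G ≤ G ⊔ Submodule.span (ZMod 2) {x} := le_sup_left
  have hiso : IsotropicV6 (G ⊔ Submodule.span (ZMod 2) {x}) := by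
    intro u hu v hv
    rcases Submodule.mem_sup.1 hu with ⟨g, hg, u', hu', rfl⟩
    rcases Submodule.mem_sup.1 hv with ⟨h, hh, v', hv', rfl⟩
    rcases Submodule.mem_span_singleton.1 hu' with ⟨c, rfl⟩
    rcases Submodule.mem_span_singleton.1 hv' with ⟨d, rfl⟩
    have hcx : c • x = 0 ∨ c • x = x := zmod2_smul c x
    have hdx : d • x = 0 ∨ d • x = x := zmod2_smul d x
    have e1 : bigForm g h = 0 := hmax.1 g hg h hh
    have e2 : bigForm g (d • x) = 0 := by
      rcases hdx with h' | h' <;> rw [h']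
      · exact bigForm_zero_right g
      · rw [bigForm_comm]; exact hx g hg
    have e3 : bigForm (c • x) h = 0 := by
      rcases hcx with h' | h' <;> rw [h']
      · exact bigForm_zero_left h
      · exact hx h hh
    have e4 : bigForm (c • x) (d • x) = 0 := by
      rcases hcx with h' | h' <;> rcases hdx with h'' | h'' <;> rw [h', h'']
      · exact bigForm_zero_left 0
      · exact bigForm_zero_left x
      · exact bigForm_zero_right x
      · exact bigForm_self x
    rw [bigForm_add_left, bigForm_add_right, bigForm_add_right, e1, e2, e3, e4]
    simp
  have := hmax.2 _ hiso hsub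
  rw [← this]
  exact (le_sup_right : Submodule.span (ZMod 2) {x} ≤ _) (Submodule.mem_span_singleton_self x)
lemma tt_decide1 : ∀ a x : TwoTorsion, a ≠ 0 → eps x a = 0 → x = 0 ∨ x = a := by decide

lemma eps_two0 : ∀ a x y : TwoTorsion, (x = 0 ∨ x = a) → (y = 0 ∨ y = a) → eps x y = 0 := by
  decide

lemma tt_add_mem : ∀ a x y : TwoTorsion, (x = 0 ∨ x = a) → (y = 0 ∨ y = a) →
    (x + y = 0 ∨ x + y = a) := by decide

lemma mem_span_tt {a x : TwoTorsion} :
    x ∈ Submodule.span (ZMod 2) {a} ↔ (x = 0 ∨ x = a) := by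
  rw [Submodule.mem_span_singleton]
  constructor
  · rintro ⟨c, rfl⟩
    rcases zmod2_smul c a with h | h <;> rw [h] <;> simp
  · rintro (rfl | rfl)
    · exact ⟨0, by simp⟩
    · exact ⟨1, by simp⟩

lemma maxiso_span {a : TwoTorsion} (ha : a ≠ 0) : MaxIsoV2 (Submodule.span (ZMod 2) {a}) := by
  constructor
  · intro x hx y hy
    exact eps_two0 a x y (mem_span_tt.1 hx) (mem_span_tt.1 hy)
  · intro G' hG' hle
    apply le_antisymm _ hle
    intro x hx
    have haG' : a ∈ G' := hle (mem_span_tt.2 (Or.inr rfl))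
    have := hG' x hx a haG'
    exact mem_span_tt.2 (tt_decide1 a x ha this)

lemma splits_of_pure1 {G : Submodule (ZMod 2) SixSpace} (hmax : MaxIsoV6 G)
    {a : TwoTorsion} (ha : a ≠ 0) (hp : ((a, 0, 0) : SixSpace) ∈ G) : Splits G := by
  classical
  set π : SixSpace →ₗ[ZMod 2] TwoTorsion × TwoTorsion :=
    LinearMap.snd (ZMod 2) TwoTorsion (TwoTorsion × TwoTorsion) with hπ
  have hπapp : ∀ v : SixSpace, π v = v.2 := fun v => rfl
  have hdec : ∀ v w : SixSpace, bigForm v w = eps v.1 w.1 + eps2 v.2 w.2 := by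
    intro v w; simp only [bigForm, eps2]; ring
  have hcoord : ∀ g ∈ G, g.1 = 0 ∨ g.1 = a := by
    intro g hg
    have h0 : bigForm (a, 0, 0) g = 0 := hmax.1 _ hp g hg
    rw [hdec] at h0
    simp only [eps2, eps] at h0
    have : eps g.1 a = 0 := by
      simp only [eps] at h0 ⊢
      rw [show g.1.1 * a.2 + g.1.2 * a.1 = a.1 * g.1.2 + a.2 * g.1.1 from by ring]
      simpa using h0
    exact tt_decide1 a g.1 ha this
  set S1 := Submodule.span (ZMod 2) {a} with hS1
  set S2 := Submodule.map π G with hS2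
  left
  refine ⟨S1, S2, maxiso_span ha, ⟨?_, ?_⟩, ?_⟩
  · -- IsotropicV4 S2
    rintro x ⟨g, hg, rfl⟩ y ⟨h, hh, rfl⟩
    have h0 : bigForm g h = 0 := hmax.1 g hg h hh
    rw [hdec] at h0
    rw [eps_two0 a g.1 h.1 (hcoord g hg) (hcoord h hh), zero_add] at h0
    exact h0
  · -- maximality of S2
    intro S2' hS2' hle
    have hG'iso : IsotropicV6 (Submodule.comap (LinearMap.fst (ZMod 2) TwoTorsion _) S1 ⊓
        Submodule.comap π S2') := by
      rintro v ⟨hv1, hv2⟩ w ⟨hw1, hw2⟩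
      rw [hdec, eps_two0 a v.1 w.1 (mem_span_tt.1 hv1) (mem_span_tt.1 hw1), zero_add]
      exact hS2' _ hv2 _ hw2
    have hGle : G ≤ Submodule.comap (LinearMap.fst (ZMod 2) TwoTorsion (TwoTorsion × TwoTorsion)) S1 ⊓ Submodule.comap π S2' := by
      intro g hg
      refine Submodule.mem_inf.2 ⟨Submodule.mem_comap.2 ?_, Submodule.mem_comap.2 (hle ⟨g, hg, rfl⟩)⟩
      exact mem_span_tt.2 (hcoord g hg)
    have heq := hmax.2 _ hG'iso hGle
    refine le_antisymm ?_ hle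
    intro x hx
    have hv : ((0 : TwoTorsion), x) ∈ G := by
      rw [← heq]
      exact Submodule.mem_inf.2 ⟨Submodule.mem_comap.2 (mem_span_tt.2 (Or.inl rfl)),
        Submodule.mem_comap.2 hx⟩
    exact ⟨_, hv, rfl⟩
  · intro v
    constructor
    · intro hv
      exact ⟨mem_span_tt.2 (hcoord v hv), ⟨v, hv, rfl⟩⟩
    · rintro ⟨hv1, g, hg, hg2⟩
      have hd : v.1 + g.1 = 0 ∨ v.1 + g.1 = a :=
        tt_add_mem a v.1 g.1 (mem_span_tt.1 hv1) (hcoord g hg)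
      have hpure : ((v.1 + g.1, 0, 0) : SixSpace) ∈ G := by
        rcases hd with h | h <;> rw [h]
        · exact G.zero_mem
        · exact hp
      have := G.add_mem hg hpure
      have hg2' : g.2 = v.2 := hg2
      have hcancel : ∀ x y : TwoTorsion, x + (y + x) = y := by decide
      have hveq : g + ((v.1 + g.1, 0, 0) : SixSpace) = v := by
        have h1 : (g + ((v.1 + g.1, 0, 0) : SixSpace)).1 = v.1 := hcancel g.1 v.1
        have h2 : (g + ((v.1 + g.1, 0, 0) : SixSpace)).2 = v.2 := by
          show g.2 + 0 = v.2
          rw [add_zero, hg2']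
        exact Prod.ext h1 h2
      rwa [hveq] at this
lemma splits_of_pure2 {G : Submodule (ZMod 2) SixSpace} (hmax : MaxIsoV6 G)
    {a : TwoTorsion} (ha : a ≠ 0) (hp : ((0, a, 0) : SixSpace) ∈ G) : Splits G := by
  classical
  set π : SixSpace →ₗ[ZMod 2] TwoTorsion × TwoTorsion :=
    LinearMap.prod (LinearMap.fst (ZMod 2) TwoTorsion (TwoTorsion × TwoTorsion))
      ((LinearMap.snd (ZMod 2) TwoTorsion TwoTorsion).comp
        (LinearMap.snd (ZMod 2) TwoTorsion (TwoTorsion × TwoTorsion))) with hπ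
  set πm : SixSpace →ₗ[ZMod 2] TwoTorsion :=
    (LinearMap.fst (ZMod 2) TwoTorsion TwoTorsion).comp
      (LinearMap.snd (ZMod 2) TwoTorsion (TwoTorsion × TwoTorsion)) with hπm
  have hπapp : ∀ v : SixSpace, π v = (v.1, v.2.2) := fun v => rfl
  have hdec : ∀ v w : SixSpace,
      bigForm v w = eps v.2.1 w.2.1 + eps2 (v.1, v.2.2) (w.1, w.2.2) := by
    intro v w; simp only [bigForm, eps2]; ring
  have hcoord : ∀ g ∈ G, g.2.1 = 0 ∨ g.2.1 = a := by
    intro g hg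
    have h0 : bigForm (0, a, 0) g = 0 := hmax.1 _ hp g hg
    rw [hdec] at h0
    simp only [eps2, eps] at h0
    have : eps g.2.1 a = 0 := by
      simp only [eps] at h0 ⊢
      rw [show g.2.1.1 * a.2 + g.2.1.2 * a.1 = a.1 * g.2.1.2 + a.2 * g.2.1.1 from by ring]
      simpa using h0
    exact tt_decide1 a g.2.1 ha this
  set S1 := Submodule.span (ZMod 2) {a} with hS1
  set S2 := Submodule.map π G with hS2
  right; left
  refine ⟨S1, S2, maxiso_span ha, ⟨?_, ?_⟩, ?_⟩
  · rintro x ⟨g, hg, rfl⟩ y ⟨h, hh, rfl⟩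
    have h0 : bigForm g h = 0 := hmax.1 g hg h hh
    rw [hdec] at h0
    rw [eps_two0 a g.2.1 h.2.1 (hcoord g hg) (hcoord h hh), zero_add] at h0
    exact h0
  · intro S2' hS2' hle
    have hG'iso : IsotropicV6 (Submodule.comap πm S1 ⊓ Submodule.comap π S2') := by
      rintro v ⟨hv1, hv2⟩ w ⟨hw1, hw2⟩
      rw [hdec, eps_two0 a v.2.1 w.2.1 (mem_span_tt.1 hv1) (mem_span_tt.1 hw1), zero_add]
      exact hS2' _ hv2 _ hw2
    have hGle : G ≤ Submodule.comap πm S1 ⊓ Submodule.comap π S2' := by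
      intro g hg
      refine Submodule.mem_inf.2 ⟨Submodule.mem_comap.2 ?_, Submodule.mem_comap.2 (hle ⟨g, hg, rfl⟩)⟩
      exact mem_span_tt.2 (hcoord g hg)
    have heq := hmax.2 _ hG'iso hGle
    refine le_antisymm ?_ hle
    intro x hx
    have hv : ((x.1, 0, x.2) : SixSpace) ∈ G := by
      rw [← heq]
      refine Submodule.mem_inf.2 ⟨Submodule.mem_comap.2 ?_, Submodule.mem_comap.2 ?_⟩
      · exact mem_span_tt.2 (Or.inl rfl)
      · show ((x.1, x.2) : TwoTorsion × TwoTorsion) ∈ S2'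
        exact hx
    exact ⟨_, hv, rfl⟩
  · intro v
    constructor
    · intro hv
      exact ⟨mem_span_tt.2 (hcoord v hv), ⟨v, hv, rfl⟩⟩
    · rintro ⟨hv1, g, hg, hg2⟩
      have hd : v.2.1 + g.2.1 = 0 ∨ v.2.1 + g.2.1 = a :=
        tt_add_mem a v.2.1 g.2.1 (mem_span_tt.1 hv1) (hcoord g hg)
      have hpure : ((0, v.2.1 + g.2.1, 0) : SixSpace) ∈ G := by
        rcases hd with h | h <;> rw [h]
        · exact G.zero_mem
        · exact hp
      have hsum := G.add_mem hg hpure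
      have hcancel : ∀ x y : TwoTorsion, x + (y + x) = y := by decide
      have hveq : g + ((0, v.2.1 + g.2.1, 0) : SixSpace) = v := by
        refine Prod.ext ?_ (Prod.ext ?_ ?_)
        · show g.1 + 0 = v.1
          rw [add_zero]
          have h' := congrArg (fun p : TwoTorsion × TwoTorsion => p.1) hg2
          exact h'
        · exact hcancel g.2.1 v.2.1
        · show g.2.2 + 0 = v.2.2
          rw [add_zero]
          have h' := congrArg (fun p : TwoTorsion × TwoTorsion => p.2) hg2
          exact h'
      rwa [hveq] at hsum

lemma splits_of_pure3 {G : Submodule (ZMod 2) SixSpace} (hmax : MaxIsoV6 G)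
    {a : TwoTorsion} (ha : a ≠ 0) (hp : ((0, 0, a) : SixSpace) ∈ G) : Splits G := by
  classical
  set π : SixSpace →ₗ[ZMod 2] TwoTorsion × TwoTorsion :=
    LinearMap.prod (LinearMap.fst (ZMod 2) TwoTorsion (TwoTorsion × TwoTorsion))
      ((LinearMap.fst (ZMod 2) TwoTorsion TwoTorsion).comp
        (LinearMap.snd (ZMod 2) TwoTorsion (TwoTorsion × TwoTorsion))) with hπ
  set πm : SixSpace →ₗ[ZMod 2] TwoTorsion :=
    (LinearMap.snd (ZMod 2) TwoTorsion TwoTorsion).comp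
      (LinearMap.snd (ZMod 2) TwoTorsion (TwoTorsion × TwoTorsion)) with hπm
  have hπapp : ∀ v : SixSpace, π v = (v.1, v.2.1) := fun v => rfl
  have hdec : ∀ v w : SixSpace,
      bigForm v w = eps v.2.2 w.2.2 + eps2 (v.1, v.2.1) (w.1, w.2.1) := by
    intro v w; simp only [bigForm, eps2]; ring
  have hcoord : ∀ g ∈ G, g.2.2 = 0 ∨ g.2.2 = a := by
    intro g hg
    have h0 : bigForm (0, 0, a) g = 0 := hmax.1 _ hp g hg
    rw [hdec] at h0
    simp only [eps2, eps] at h0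
    have : eps g.2.2 a = 0 := by
      simp only [eps] at h0 ⊢
      rw [show g.2.2.1 * a.2 + g.2.2.2 * a.1 = a.1 * g.2.2.2 + a.2 * g.2.2.1 from by ring]
      simpa using h0
    exact tt_decide1 a g.2.2 ha this
  set S1 := Submodule.span (ZMod 2) {a} with hS1
  set S2 := Submodule.map π G with hS2
  right; right
  refine ⟨S1, S2, maxiso_span ha, ⟨?_, ?_⟩, ?_⟩
  · rintro x ⟨g, hg, rfl⟩ y ⟨h, hh, rfl⟩
    have h0 : bigForm g h = 0 := hmax.1 g hg h hh
    rw [hdec] at h0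
    rw [eps_two0 a g.2.2 h.2.2 (hcoord g hg) (hcoord h hh), zero_add] at h0
    exact h0
  · intro S2' hS2' hle
    have hG'iso : IsotropicV6 (Submodule.comap πm S1 ⊓ Submodule.comap π S2') := by
      rintro v ⟨hv1, hv2⟩ w ⟨hw1, hw2⟩
      rw [hdec, eps_two0 a v.2.2 w.2.2 (mem_span_tt.1 hv1) (mem_span_tt.1 hw1), zero_add]
      exact hS2' _ hv2 _ hw2
    have hGle : G ≤ Submodule.comap πm S1 ⊓ Submodule.comap π S2' := by
      intro g hg
      refine Submodule.mem_inf.2 ⟨Submodule.mem_comap.2 ?_, Submodule.mem_comap.2 (hle ⟨g, hg, rfl⟩)⟩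
      exact mem_span_tt.2 (hcoord g hg)
    have heq := hmax.2 _ hG'iso hGle
    refine le_antisymm ?_ hle
    intro x hx
    have hv : ((x.1, x.2, 0) : SixSpace) ∈ G := by
      rw [← heq]
      refine Submodule.mem_inf.2 ⟨Submodule.mem_comap.2 ?_, Submodule.mem_comap.2 ?_⟩
      · exact mem_span_tt.2 (Or.inl rfl)
      · show ((x.1, x.2) : TwoTorsion × TwoTorsion) ∈ S2'
        exact hx
    exact ⟨_, hv, rfl⟩
  · intro v
    constructor
    · intro hv
      exact ⟨mem_span_tt.2 (hcoord v hv), ⟨v, hv, rfl⟩⟩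
    · rintro ⟨hv1, g, hg, hg2⟩
      have hd : v.2.2 + g.2.2 = 0 ∨ v.2.2 + g.2.2 = a :=
        tt_add_mem a v.2.2 g.2.2 (mem_span_tt.1 hv1) (hcoord g hg)
      have hpure : ((0, 0, v.2.2 + g.2.2) : SixSpace) ∈ G := by
        rcases hd with h | h <;> rw [h]
        · exact G.zero_mem
        · exact hp
      have hsum := G.add_mem hg hpure
      have hcancel : ∀ x y : TwoTorsion, x + (y + x) = y := by decide
      have hveq : g + ((0, 0, v.2.2 + g.2.2) : SixSpace) = v := by
        refine Prod.ext ?_ (Prod.ext ?_ ?_)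
        · show g.1 + 0 = v.1
          rw [add_zero]
          have h' := congrArg (fun p : TwoTorsion × TwoTorsion => p.1) hg2
          exact h'
        · show g.2.1 + 0 = v.2.1
          rw [add_zero]
          have h' := congrArg (fun p : TwoTorsion × TwoTorsion => p.2) hg2
          exact h'
        · exact hcancel g.2.2 v.2.2
      rwa [hveq] at hsum
lemma bigForm_smul_left' (c : ZMod 2) (x y : SixSpace) : bigForm (c • x) y = c • bigForm x y := by
  simp only [bigForm, eps, Prod.smul_fst, Prod.smul_snd, smul_eq_mul]; ring

noncomputable def Bform : LinearMap.BilinForm (ZMod 2) SixSpace :=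
  LinearMap.mk₂ (ZMod 2) bigForm bigForm_add_left bigForm_smul_left' bigForm_add_right
    (fun c x y => by rw [bigForm_comm, bigForm_smul_left', bigForm_comm])

@[simp] lemma Bform_apply (x y : SixSpace) : Bform x y = bigForm x y := rfl

lemma bigForm_nondeg : ∀ x : SixSpace, (∀ y : SixSpace, bigForm x y = 0) → x = 0 := by decide

lemma Bform_nondeg : Bform.Nondegenerate := ⟨fun m hm => bigForm_nondeg m hm,
  fun m hm => bigForm_nondeg m (fun y => by rw [bigForm_comm]; exact hm y)⟩

lemma Bform_refl : Bform.IsRefl := fun m n h => by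
  rw [Bform_apply, bigForm_comm]; exact h

lemma finrank_six : Module.finrank (ZMod 2) SixSpace = 6 := by
  rw [Module.finrank_prod, Module.finrank_prod, Module.finrank_prod, Module.finrank_self]
  norm_num

lemma card_G_eight {G : Submodule (ZMod 2) SixSpace} (hmax : MaxIsoV6 G) :
    Nat.card G = 8 := by
  have horth : Bform.orthogonal G = G := by
    apply le_antisymm
    · intro x hx
      apply hperp hmax
      intro y hy
      rw [bigForm_comm]
      exact hx y hy
    · intro x hx n hn
      exact hmax.1 n hn x hx
  have h1 := LinearMap.BilinForm.finrank_add_finrank_orthogonal (B := Bform) Bform_refl G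
  rw [LinearMap.BilinForm.orthogonal_top_eq_bot Bform_nondeg, inf_bot_eq, finrank_bot, add_zero,
    horth, finrank_six] at h1
  have h2 : Module.finrank (ZMod 2) G = 3 := by omega
  have : Fintype (↥G) := Fintype.ofFinite _
  rw [Nat.card_eq_fintype_card]
  rw [Module.card_eq_pow_finrank (K := ZMod 2) (V := ↥G), h2]
  rw [ZMod.card 2]
  norm_num
set_option synthInstance.maxSize 2000 in
lemma tt_cover : ∀ p q w : TwoTorsion, p ≠ 0 → q ≠ 0 → p ≠ q →
    (w = 0 ∨ w = p ∨ w = q ∨ w = p + q) := by decide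

lemma slot_surj {G : Submodule (ZMod 2) SixSpace} (hmax : MaxIsoV6 G)
    (p : SixSpace →ₗ[ZMod 2] TwoTorsion) (j : TwoTorsion → SixSpace)
    (hB : ∀ a y, bigForm (j a) y = eps a (p y))
    (hpure : ∀ a, a ≠ 0 → j a ∉ G) :
    ∀ w : TwoTorsion, ∃ g ∈ G, p g = w := by
  by_cases h : ∃ g ∈ G, ∃ h ∈ G, p g ≠ 0 ∧ p h ≠ 0 ∧ p g ≠ p h
  · obtain ⟨g, hg, h', hh, hg0, hh0, hgh⟩ := h
    intro w
    rcases tt_cover (p g) (p h') w hg0 hh0 hgh with rfl | rfl | rfl | rfl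
    · exact ⟨0, G.zero_mem, map_zero p⟩
    · exact ⟨g, hg, rfl⟩
    · exact ⟨h', hh, rfl⟩
    · exact ⟨g + h', G.add_mem hg hh, map_add p g h'⟩
  · push_neg at h
    exfalso
    have key : ∃ a : TwoTorsion, a ≠ 0 ∧ ∀ g ∈ G, p g = 0 ∨ p g = a := by
      by_cases h2 : ∃ g ∈ G, p g ≠ 0
      · obtain ⟨g, hg, hg0⟩ := h2
        refine ⟨p g, hg0, fun k hk => ?_⟩
        by_cases hk0 : p k = 0
        · exact Or.inl hk0
        · right
          by_contra hne
          exact hne ((h k hk g hg hk0 hg0).symm ▸ rfl) |>.elim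
      · push_neg at h2
        exact ⟨(0, 1), by decide, fun g hg => Or.inl (h2 g hg)⟩
    obtain ⟨a, ha, hall⟩ := key
    have hmem : j a ∈ G := by
      apply hperp hmax
      intro y hy
      rw [hB]
      exact eps_two0 a a (p y) (Or.inr rfl) (hall y hy)
    exact hpure a ha hmem

lemma slot_ker {G : Submodule (ZMod 2) SixSpace} (hmax : MaxIsoV6 G)
    (p : SixSpace →ₗ[ZMod 2] TwoTorsion)
    (hsurj : ∀ w : TwoTorsion, ∃ g ∈ G, p g = w) :
    ∃ u : SixSpace, u ∈ G ∧ u ≠ 0 ∧ p u = 0 ∧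
      ∀ z ∈ G, p z = 0 → z = 0 ∨ z = u := by
  classical
  set f : ↥G →ₗ[ZMod 2] TwoTorsion := p.comp G.subtype with hf
  have hfs : Function.Surjective f := by
    intro w
    obtain ⟨g, hg, hgw⟩ := hsurj w
    exact ⟨⟨g, hg⟩, hgw⟩
  have hcard := Submodule.card_eq_card_quotient_mul_card (LinearMap.ker f)
  have hq : Nat.card (↥G ⧸ LinearMap.ker f) = 4 := by
    rw [Nat.card_congr (f.quotKerEquivOfSurjective hfs).toEquiv]
    simp [Nat.card_eq_fintype_card]
  rw [card_G_eight hmax, hq] at hcard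
  have hk : Nat.card (LinearMap.ker f) = 2 := by omega
  rcases Nat.card_eq_two_iff.1 hk with ⟨x, y, hxy, huniv⟩
  have coe_eq : ∀ z w : LinearMap.ker f, ((z : ↥G) : SixSpace) = ((w : ↥G) : SixSpace) → z = w :=
    fun z w h => Subtype.ext (Subtype.ext h)
  have hcases : ∀ z : LinearMap.ker f, z = x ∨ z = y := by
    intro z
    have : z ∈ ({x, y} : Set (LinearMap.ker f)) := huniv ▸ Set.mem_univ z
    simpa using this
  have hcoe : ∀ z : LinearMap.ker f, ((z : ↥G) : SixSpace) ∈ G ∧ p ((z : ↥G) : SixSpace) = 0 :=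
    fun z => ⟨((z : ↥G)).2, LinearMap.mem_ker.1 z.2⟩
  rcases hcases 0 with h0 | h0
  · refine ⟨((y : ↥G) : SixSpace), (hcoe y).1, ?_, (hcoe y).2, ?_⟩
    · intro hy0
      exact hxy (h0.symm.trans (coe_eq y 0 hy0).symm)
    · intro z hz hpz
      have hzk : (⟨⟨z, hz⟩, LinearMap.mem_ker.2 hpz⟩ : LinearMap.ker f) = x ∨
          (⟨⟨z, hz⟩, LinearMap.mem_ker.2 hpz⟩ : LinearMap.ker f) = y := hcases _
      rcases hzk with h | h
      · left
        exact congrArg (fun t : LinearMap.ker f => ((t : ↥G) : SixSpace)) (h.trans h0.symm)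
      · right
        exact congrArg (fun t : LinearMap.ker f => ((t : ↥G) : SixSpace)) h
  · refine ⟨((x : ↥G) : SixSpace), (hcoe x).1, ?_, (hcoe x).2, ?_⟩
    · intro hx0
      exact hxy ((coe_eq x 0 hx0).trans h0)
    · intro z hz hpz
      have hzk : (⟨⟨z, hz⟩, LinearMap.mem_ker.2 hpz⟩ : LinearMap.ker f) = x ∨
          (⟨⟨z, hz⟩, LinearMap.mem_ker.2 hpz⟩ : LinearMap.ker f) = y := hcases _
      rcases hzk with h | h
      · right
        exact congrArg (fun t : LinearMap.ker f => ((t : ↥G) : SixSpace)) h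
      · left
        exact congrArg (fun t : LinearMap.ker f => ((t : ↥G) : SixSpace)) (h.trans h0.symm)
lemma eps_zero_left : ∀ y : TwoTorsion, eps 0 y = 0 := by decide
lemma eps_zero_right : ∀ y : TwoTorsion, eps y 0 = 0 := by decide

lemma tt_eq_of_eps {x y : TwoTorsion} (hx : x ≠ 0) (hy : y ≠ 0) (h : eps y x = 0) : y = x := by
  revert x y; decide

lemma tt_cancel (x : TwoTorsion) : x + x = 0 := by
  ext <;> exact zmod2_cancel _

lemma six_self (x : SixSpace) : x + x = 0 := by
  ext <;> exact zmod2_cancel _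

set_option synthInstance.maxSize 2000 in
lemma tt_label : ∀ P Q x : TwoTorsion, P ≠ 0 → Q ≠ 0 → P ≠ Q →
    ((x = P ∨ x = Q ∨ x = P + Q) ↔ x ≠ 0) := by decide

set_option synthInstance.maxSize 2000 in
lemma tt_dist : ∀ P Q : TwoTorsion, P ≠ 0 → Q ≠ 0 → P ≠ Q →
    (Q ≠ P + Q ∧ P ≠ P + Q) := by decide

/-- A non-split maximal isotropic subspace of `V₁ ⊕ V₂ ⊕ V₃` is, after labeling the nonzero
elements of each `Vᵢ` as `Pᵢ, Qᵢ, Rᵢ`, the group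
`{0, (0,Q₂,Q₃), (Q₁,0,Q₃), (Q₁,Q₂,0), (P₁,P₂,P₃), (P₁,R₂,R₃), (R₁,P₂,R₃), (R₁,R₂,P₃)}`. -/
theorem stmt2 (G : Submodule (ZMod 2) SixSpace) (hmax : MaxIsoV6 G) (hns : ¬ Splits G) :
    ∃ P₁ Q₁ R₁ P₂ Q₂ R₂ P₃ Q₃ R₃ : TwoTorsion,
      ({P₁, Q₁, R₁} : Set TwoTorsion) = {v | v ≠ 0} ∧
      ({P₂, Q₂, R₂} : Set TwoTorsion) = {v | v ≠ 0} ∧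
      ({P₃, Q₃, R₃} : Set TwoTorsion) = {v | v ≠ 0} ∧
      P₁ ≠ Q₁ ∧ Q₁ ≠ R₁ ∧ P₁ ≠ R₁ ∧
      P₂ ≠ Q₂ ∧ Q₂ ≠ R₂ ∧ P₂ ≠ R₂ ∧
      P₃ ≠ Q₃ ∧ Q₃ ≠ R₃ ∧ P₃ ≠ R₃ ∧
      (G : Set SixSpace) =
        {(0, 0, 0), (0, Q₂, Q₃), (Q₁, 0, Q₃), (Q₁, Q₂, 0),
         (P₁, P₂, P₃), (P₁, R₂, R₃), (R₁, P₂, R₃), (R₁, R₂, P₃)} := by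
  classical
  have hp1 : ∀ a : TwoTorsion, a ≠ 0 → ((a, 0, 0) : SixSpace) ∉ G :=
    fun a ha h => hns (splits_of_pure1 hmax ha h)
  have hp2 : ∀ a : TwoTorsion, a ≠ 0 → ((0, a, 0) : SixSpace) ∉ G :=
    fun a ha h => hns (splits_of_pure2 hmax ha h)
  have hp3 : ∀ a : TwoTorsion, a ≠ 0 → ((0, 0, a) : SixSpace) ∉ G :=
    fun a ha h => hns (splits_of_pure3 hmax ha h)
  set p1 : SixSpace →ₗ[ZMod 2] TwoTorsion :=
    LinearMap.fst (ZMod 2) TwoTorsion (TwoTorsion × TwoTorsion) with hp1def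
  set p2 : SixSpace →ₗ[ZMod 2] TwoTorsion :=
    (LinearMap.fst (ZMod 2) TwoTorsion TwoTorsion).comp
      (LinearMap.snd (ZMod 2) TwoTorsion (TwoTorsion × TwoTorsion)) with hp2def
  set p3 : SixSpace →ₗ[ZMod 2] TwoTorsion :=
    (LinearMap.snd (ZMod 2) TwoTorsion TwoTorsion).comp
      (LinearMap.snd (ZMod 2) TwoTorsion (TwoTorsion × TwoTorsion)) with hp3def
  have hB1 : ∀ (a : TwoTorsion) (y : SixSpace), bigForm (a, 0, 0) y = eps a (p1 y) := by
    intro a y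
    show eps a y.1 + eps 0 y.2.1 + eps 0 y.2.2 = eps a y.1
    rw [eps_zero_left, eps_zero_left, add_zero, add_zero]
  have hB2 : ∀ (a : TwoTorsion) (y : SixSpace), bigForm (0, a, 0) y = eps a (p2 y) := by
    intro a y
    show eps 0 y.1 + eps a y.2.1 + eps 0 y.2.2 = eps a y.2.1
    rw [eps_zero_left, eps_zero_left, add_zero, zero_add]
  have hB3 : ∀ (a : TwoTorsion) (y : SixSpace), bigForm (0, 0, a) y = eps a (p3 y) := by
    intro a y
    show eps 0 y.1 + eps 0 y.2.1 + eps a y.2.2 = eps a y.2.2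
    rw [eps_zero_left, eps_zero_left, zero_add, zero_add]
  obtain ⟨u, huG, hu0, hpu, hukey⟩ := slot_ker hmax p1
    (slot_surj hmax p1 (fun a => (a, 0, 0)) hB1 hp1)
  obtain ⟨v, hvG, hv0, hpv, hvkey⟩ := slot_ker hmax p2
    (slot_surj hmax p2 (fun a => (0, a, 0)) hB2 hp2)
  obtain ⟨w', hwG', hw0', hpw, hwkey⟩ := slot_ker hmax p3
    (slot_surj hmax p3 (fun a => (0, 0, a)) hB3 hp3)
  have hu1 : u.1 = 0 := hpu
  have hv2 : v.2.1 = 0 := hpv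
  -- components of u are nonzero
  have hQ2 : u.2.1 ≠ 0 := by
    intro h
    have hu22 : u.2.2 ≠ 0 := by
      intro h2
      apply hu0
      refine Prod.ext hu1 (Prod.ext h h2)
    exact hp3 u.2.2 hu22 (by
      have : u = ((0, 0, u.2.2) : SixSpace) := Prod.ext hu1 (Prod.ext h rfl)
      rwa [this] at huG)
  have hQ3 : u.2.2 ≠ 0 := by
    intro h
    have hu21 : u.2.1 ≠ 0 := by
      intro h2
      apply hu0
      exact Prod.ext hu1 (Prod.ext h2 h)
    exact hp2 u.2.1 hu21 (by
      have : u = ((0, u.2.1, 0) : SixSpace) := Prod.ext hu1 (Prod.ext rfl h)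
      rwa [this] at huG)
  have hQ1 : v.1 ≠ 0 := by
    intro h
    have hv22 : v.2.2 ≠ 0 := by
      intro h2
      apply hv0
      exact Prod.ext h (Prod.ext hv2 h2)
    exact hp3 v.2.2 hv22 (by
      have : v = ((0, 0, v.2.2) : SixSpace) := Prod.ext h (Prod.ext hv2 rfl)
      rwa [this] at hvG)
  have hv3 : v.2.2 ≠ 0 := by
    intro h
    exact hp1 v.1 hQ1 (by
      have : v = ((v.1, 0, 0) : SixSpace) := Prod.ext rfl (Prod.ext hv2 h)
      rwa [this] at hvG)
  -- v.2.2 = u.2.2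
  have hv22 : v.2.2 = u.2.2 := by
    have hb : bigForm u v = 0 := hmax.1 u huG v hvG
    have : eps u.1 v.1 + eps u.2.1 v.2.1 + eps u.2.2 v.2.2 = 0 := hb
    rw [hu1, hv2, eps_zero_left, eps_zero_right] at this
    simp only [zero_add, add_zero] at this
    have := tt_eq_of_eps hQ3 hv3 (by rwa [show eps v.2.2 u.2.2 = eps u.2.2 v.2.2 from by
      simp only [eps]; ring])
    exact this
  -- w := u + v, kernel element of p3
  set w : SixSpace := u + v with hwdef
  have hwG : w ∈ G := G.add_mem huG hvG
  have hw3 : w.2.2 = 0 := by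
    show u.2.2 + v.2.2 = 0
    rw [hv22]; exact tt_cancel _
  have hw1 : w.1 = v.1 := by
    show u.1 + v.1 = v.1
    rw [hu1, zero_add]
  have hw2 : w.2.1 = u.2.1 := by
    show u.2.1 + v.2.1 = u.2.1
    rw [hv2, add_zero]
  have hwne : w ≠ 0 := by
    intro h
    apply hQ1
    rw [← hw1, h]
    rfl
  -- w is THE kernel element of p3
  have hww' : w = w' := by
    rcases hwkey w hwG hw3 with h | h
    · exact absurd h hwne
    · exact h
  have hwkey' : ∀ z ∈ G, z.2.2 = 0 → z = 0 ∨ z = w := by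
    intro z hz h3
    rcases hwkey z hz h3 with h | h
    · exact Or.inl h
    · exact Or.inr (h.trans hww'.symm)
  -- u ≠ v, w distinct etc.
  have huv : u ≠ v := fun h => hQ1 (by rw [← h]; exact hu1)
  -- pick t ∈ G outside {0, u, v, w}
  have hex : ∃ t ∈ G, t ≠ 0 ∧ t ≠ u ∧ t ≠ v ∧ t ≠ w := by
    by_contra hcon
    push_neg at hcon
    have hsub : (G : Set SixSpace) ⊆ {0, u, v, w} := by
      intro z hz
      by_cases h0 : z = 0
      · exact Or.inl h0
      by_cases h1 : z = u
      · exact Or.inr (Or.inl h1)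
      by_cases h2 : z = v
      · exact Or.inr (Or.inr (Or.inl h2))
      exact Or.inr (Or.inr (Or.inr (hcon z hz h0 h1 h2)))
    have h8 : Nat.card G = 8 := card_G_eight hmax
    have hle : (G : Set SixSpace).ncard ≤ ({0, u, v, w} : Set SixSpace).ncard :=
      Set.ncard_le_ncard hsub (Set.toFinite _)
    have h4 : ({0, u, v, w} : Set SixSpace).ncard ≤ 4 := by
      have a1 := Set.ncard_insert_le (0 : SixSpace) ({u, v, w} : Set SixSpace)
      have a2 := Set.ncard_insert_le u ({v, w} : Set SixSpace)
      have a3 := Set.ncard_insert_le v ({w} : Set SixSpace)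
      have a4 : ({w} : Set SixSpace).ncard = 1 := Set.ncard_singleton w
      omega
    have hG8 : (G : Set SixSpace).ncard = 8 := by
      rw [← Nat.card_coe_set_eq]
      exact h8
    omega
  obtain ⟨t, htG, ht0, htu, htv, htw⟩ := hex
  -- components of t
  have hsolve : ∀ z c : SixSpace, z + c = 0 ∨ z + c = u → z = c ∨ z = u + c := by
    intro z c h
    rcases h with h | h
    · left
      have : z + c + c = 0 + c := by rw [h]
      rwa [add_assoc, six_self, add_zero, zero_add] at this
    · right
      have : z + c + c = u + c := by rw [h]
      rwa [add_assoc, six_self, add_zero] at this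
  have hP1 : t.1 ≠ 0 := by
    intro h
    rcases hukey t htG h with h' | h'
    · exact ht0 h'
    · exact htu h'
  have hP1Q1 : t.1 ≠ v.1 := by
    intro h
    have : (t + v).1 = 0 := by
      show t.1 + v.1 = 0
      rw [h]; exact tt_cancel _
    rcases hsolve t v (hukey (t + v) (G.add_mem htG hvG) this) with h' | h'
    · exact htv h'
    · exact htw (h'.trans hwdef.symm)
  have hP2 : t.2.1 ≠ 0 := by
    intro h
    rcases hvkey t htG h with h' | h'
    · exact ht0 h'
    · exact htv h'
  have hP2Q2 : t.2.1 ≠ u.2.1 := by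
    intro h
    have h3 : (t + w).2.1 = 0 := by
      show t.2.1 + w.2.1 = 0
      rw [hw2, h]; exact tt_cancel _
    rcases hvkey (t + w) (G.add_mem htG hwG) h3 with h' | h'
    · -- t + w = 0 → t = w
      apply htw
      have : t + w + w = 0 + w := by rw [h']
      rwa [add_assoc, six_self, add_zero, zero_add] at this
    · -- t + w = v → t = v + w = v + u + v = u
      apply htu
      have : t + w + w = v + w := by rw [h']
      rw [add_assoc, six_self, add_zero] at this
      rw [this, hwdef]
      have : v + (u + v) = u + (v + v) := by ring
      rw [this, six_self, add_zero]
  have hP3 : t.2.2 ≠ 0 := by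
    intro h
    rcases hwkey' t htG h with h' | h'
    · exact ht0 h'
    · exact htw h'
  have hP3Q3 : t.2.2 ≠ u.2.2 := by
    intro h
    have h3 : (t + u).2.2 = 0 := by
      show t.2.2 + u.2.2 = 0
      rw [h]; exact tt_cancel _
    rcases hwkey' (t + u) (G.add_mem htG huG) h3 with h' | h'
    · apply htu
      have : t + u + u = 0 + u := by rw [h']
      rwa [add_assoc, six_self, add_zero, zero_add] at this
    · apply htv
      have : t + u + u = w + u := by rw [h']
      rw [add_assoc, six_self, add_zero] at this
      rw [this, hwdef]
      have : u + v + u = v + (u + u) := by ring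
      rw [this, six_self, add_zero]
  -- labels
  refine ⟨t.1, v.1, t.1 + v.1, t.2.1, u.2.1, t.2.1 + u.2.1, t.2.2, u.2.2, t.2.2 + u.2.2,
    ?_, ?_, ?_, hP1Q1, ?_, ?_,
    hP2Q2, ?_, ?_, hP3Q3, ?_, ?_, ?_⟩
  · ext x
    simp only [Set.mem_insert_iff, Set.mem_singleton_iff, Set.mem_setOf_eq]
    exact tt_label t.1 v.1 x hP1 hQ1 hP1Q1
  · ext x
    simp only [Set.mem_insert_iff, Set.mem_singleton_iff, Set.mem_setOf_eq]
    exact tt_label t.2.1 u.2.1 x hP2 hQ2 hP2Q2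
  · ext x
    simp only [Set.mem_insert_iff, Set.mem_singleton_iff, Set.mem_setOf_eq]
    exact tt_label t.2.2 u.2.2 x hP3 hQ3 hP3Q3
  · exact (tt_dist _ _ hP1 hQ1 hP1Q1).1
  · exact (tt_dist _ _ hP1 hQ1 hP1Q1).2
  · exact (tt_dist _ _ hP2 hQ2 hP2Q2).1
  · exact (tt_dist _ _ hP2 hQ2 hP2Q2).2
  · exact (tt_dist _ _ hP3 hQ3 hP3Q3).1
  · exact (tt_dist _ _ hP3 hQ3 hP3Q3).2
  · -- the set equality
    have hu_eq : u = ((0, u.2.1, u.2.2) : SixSpace) := Prod.ext hu1 rfl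
    have hv_eq : v = ((v.1, 0, u.2.2) : SixSpace) := Prod.ext rfl (Prod.ext hv2 hv22)
    have hw_eq : w = ((v.1, u.2.1, 0) : SixSpace) := Prod.ext hw1 (Prod.ext hw2 hw3)
    have ht_eq : t = ((t.1, t.2.1, t.2.2) : SixSpace) := rfl
    have htu_eq : t + u = ((t.1, t.2.1 + u.2.1, t.2.2 + u.2.2) : SixSpace) :=
      Prod.ext (show t.1 + u.1 = t.1 by rw [hu1, add_zero]) rfl
    have htv_eq : t + v = ((t.1 + v.1, t.2.1, t.2.2 + u.2.2) : SixSpace) :=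
      Prod.ext rfl (Prod.ext (show t.2.1 + v.2.1 = t.2.1 by rw [hv2, add_zero])
        (show t.2.2 + v.2.2 = t.2.2 + u.2.2 by rw [hv22]))
    have htw_eq : t + w = ((t.1 + v.1, t.2.1 + u.2.1, t.2.2) : SixSpace) :=
      Prod.ext (show t.1 + w.1 = t.1 + v.1 by rw [hw1])
        (Prod.ext (show t.2.1 + w.2.1 = t.2.1 + u.2.1 by rw [hw2])
          (show t.2.2 + w.2.2 = t.2.2 by rw [hw3, add_zero]))
    ext z
    simp only [SetLike.mem_coe, Set.mem_insert_iff, Set.mem_singleton_iff]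
    constructor
    · intro hz
      rcases tt_cover t.1 v.1 z.1 hP1 hQ1 hP1Q1 with h | h | h | h
      · rcases hukey z hz h with h' | h'
        · exact Or.inl (by rw [h']; rfl)
        · exact Or.inr (Or.inl (h'.trans hu_eq))
      · -- z.1 = t.1
        have hz1 : (z + t).1 = 0 := by
          show z.1 + t.1 = 0
          rw [h]; exact tt_cancel _
        rcases hsolve z t (hukey (z + t) (G.add_mem hz htG) hz1) with h' | h'
        · exact Or.inr (Or.inr (Or.inr (Or.inr (Or.inl (h'.trans ht_eq)))))
        · have : z = t + u := h'.trans (add_comm u t)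
          exact Or.inr (Or.inr (Or.inr (Or.inr (Or.inr (Or.inl (this.trans htu_eq))))))
      · -- z.1 = v.1
        have hz1 : (z + v).1 = 0 := by
          show z.1 + v.1 = 0
          rw [h]; exact tt_cancel _
        rcases hsolve z v (hukey (z + v) (G.add_mem hz hvG) hz1) with h' | h'
        · exact Or.inr (Or.inr (Or.inl (h'.trans hv_eq)))
        · have : z = w := h'.trans hwdef.symm
          exact Or.inr (Or.inr (Or.inr (Or.inl (this.trans hw_eq))))
      · -- z.1 = t.1 + v.1
        have hz1 : (z + (t + v)).1 = 0 := by
          show z.1 + (t.1 + v.1) = 0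
          rw [h]; exact tt_cancel _
        rcases hsolve z (t + v) (hukey (z + (t + v)) (G.add_mem hz (G.add_mem htG hvG)) hz1)
          with h' | h'
        · exact Or.inr (Or.inr (Or.inr (Or.inr (Or.inr (Or.inr (Or.inl (h'.trans htv_eq)))))))
        · have : z = t + w := by
            rw [h', hwdef]
            exact (add_left_comm u t v).symm ▸ add_left_comm u t v
          exact Or.inr (Or.inr (Or.inr (Or.inr (Or.inr (Or.inr (Or.inr
            (this.trans htw_eq)))))))
    · intro hz
      rcases hz with rfl | rfl | rfl | rfl | rfl | rfl | rfl | rfl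
      · exact G.zero_mem
      · exact hu_eq ▸ huG
      · exact hv_eq ▸ hvG
      · exact hw_eq ▸ hwG
      · exact ht_eq ▸ htG
      · exact htu_eq ▸ (G.add_mem htG huG)
      · exact htv_eq ▸ (G.add_mem htG hvG)
      · exact htw_eq ▸ (G.add_mem htG hwG)
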